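/- Let α be a standard Borel space and ρ a Borel probability measure on α × ℝ with disintegration (ρ_a)_{a∈α} over the first coordinate. Let T : α × ℝ → α × ℝ be measurable of the form T(a,ω) = (g(a), h(a,ω)) with T_*ρ = ρ, where g : α → α is a measurable bijection with measurable inverse and each ω ↦ h(a,ω) is a strictly increasing homeomorphism of ℝ. For c ∈ [0,1] set H_c = {(a,ω) : ρ_a((-∞,ω]) ≤ c}. Then H_c is T-invariant modulo ρ (i.e. ρ(T⁻¹(H_c) Δ H_c) = 0), ρ(H_c) ≤ c, and if ρ_a is non-atomic for ρ.fst-almost every a, then ρ(H_c) = c for every c ∈ [0,1]. -/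

import Mathlib

open MeasureTheory ProbabilityTheory
open scoped symmDiff ENNReal

/-- Upper bound for the measure of a CDF sublevel set. -/
lemma cdf_sublevel_le (μ : Measure ℝ) [IsFiniteMeasure μ] (c : ℝ≥0∞) :
    μ {ω | μ (Set.Iic ω) ≤ c} ≤ c := by
  set S := {ω | μ (Set.Iic ω) ≤ c} with hSdef
  have hlow : ∀ ⦃x y : ℝ⦄, x ≤ y → y ∈ S → x ∈ S := fun x y hxy hy =>
    le_trans (measure_mono (Set.Iic_subset_Iic.2 hxy)) hy
  rcases S.eq_empty_or_nonempty with hS | hS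
  · simp [hS]
  by_cases hb : BddAbove S
  · set s := sSup S with hs
    by_cases hmem : s ∈ S
    · exact le_trans (measure_mono fun x hx => (le_csSup hb hx : x ≤ s)) hmem
    · have hmem' : ∀ n : ℕ, s - 1/((n:ℝ)+1) ∈ S := by
        intro n
        have hpos : (0:ℝ) < 1/((n:ℝ)+1) := by positivity
        have hlt : s - 1/((n:ℝ)+1) < s := by linarith
        obtain ⟨y, hy, hxy⟩ := exists_lt_of_lt_csSup hS hlt
        exact hlow hxy.le hy
      have hsub : S ⊆ ⋃ n : ℕ, Set.Iic (s - 1/((n:ℝ)+1)) := by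
        intro x hx
        have hxs : x < s := lt_of_le_of_ne (le_csSup hb hx) (fun h => hmem (h ▸ hx))
        obtain ⟨n, hn⟩ := exists_nat_one_div_lt (sub_pos.2 hxs)
        exact Set.mem_iUnion.2 ⟨n, by simp only [Set.mem_Iic]; linarith⟩
      refine le_trans (measure_mono hsub) ?_
      have hmono : Monotone fun n : ℕ => Set.Iic (s - 1/((n:ℝ)+1)) := by
        intro m n hmn
        apply Set.Iic_subset_Iic.2
        have h1 : 1/((n:ℝ)+1) ≤ 1/((m:ℝ)+1) := by
          apply one_div_le_one_div_of_le (by positivity)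
          have : (m:ℝ) ≤ n := by exact_mod_cast hmn
          linarith
        linarith
      rw [hmono.measure_iUnion]
      exact iSup_le fun n => hmem' n
  · have hall : ∀ n : ℕ, (n:ℝ) ∈ S := by
      intro n
      obtain ⟨y, hy, hny⟩ := not_bddAbove_iff.1 hb n
      exact hlow hny.le hy
    have huniv : (Set.univ : Set ℝ) = ⋃ n : ℕ, Set.Iic (n:ℝ) := by
      ext x
      simp only [Set.mem_univ, Set.mem_iUnion, Set.mem_Iic, true_iff]
      exact exists_nat_ge x
    refine le_trans (measure_mono (Set.subset_univ S)) ?_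
    rw [huniv]
    have hmono : Monotone fun n : ℕ => Set.Iic ((n:ℝ)) := fun m n hmn =>
      Set.Iic_subset_Iic.2 (by exact_mod_cast hmn)
    rw [hmono.measure_iUnion]
    exact iSup_le fun n => hall n

/-- Lower bound for the measure of a CDF sublevel set when the measure is non-atomic. -/
lemma cdf_sublevel_ge (μ : Measure ℝ) [IsProbabilityMeasure μ] (hna : ∀ ω : ℝ, μ {ω} = 0)
    (c : ℝ≥0∞) (hc : c ≤ 1) : c ≤ μ {ω | μ (Set.Iic ω) ≤ c} := by
  set S := {ω | μ (Set.Iic ω) ≤ c} with hSdef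
  have hlow : ∀ ⦃x y : ℝ⦄, x ≤ y → y ∈ S → x ∈ S := fun x y hxy hy =>
    le_trans (measure_mono (Set.Iic_subset_Iic.2 hxy)) hy
  rcases S.eq_empty_or_nonempty with hS | hS
  · have hforall : ∀ x : ℝ, c ≤ μ (Set.Iic x) := fun x =>
      (lt_of_not_ge fun h => (Set.eq_empty_iff_forall_notMem.1 hS x) h).le
    have hinter : (⋂ n : ℕ, Set.Iic (-(n:ℝ))) = ∅ := by
      ext x
      simp only [Set.mem_iInter, Set.mem_Iic, Set.mem_empty_iff_false, iff_false, not_forall,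
        not_le]
      obtain ⟨n, hn⟩ := exists_nat_gt (-x)
      exact ⟨n, by linarith⟩
    have hanti : Antitone fun n : ℕ => Set.Iic (-(n:ℝ)) := by
      intro m n hmn
      apply Set.Iic_subset_Iic.2
      have hmn' : (m:ℝ) ≤ n := by exact_mod_cast hmn
      linarith
    have hmeasq : μ (⋂ n : ℕ, Set.Iic (-(n:ℝ))) = ⨅ n : ℕ, μ (Set.Iic (-(n:ℝ))) :=
      Directed.measure_iInter (fun n => measurableSet_Iic.nullMeasurableSet)
        hanti.directed_ge ⟨0, measure_ne_top μ _⟩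
    have hc0 : c ≤ 0 := by
      calc c ≤ ⨅ n : ℕ, μ (Set.Iic (-(n:ℝ))) := le_iInf fun n => hforall _
        _ = μ (⋂ n : ℕ, Set.Iic (-(n:ℝ))) := hmeasq.symm
        _ = 0 := by rw [hinter]; exact measure_empty
    exact le_trans hc0 zero_le
  by_cases hb : BddAbove S
  · set s := sSup S with hs
    by_cases hmem : s ∈ S
    · have hIic : Set.Iic s ⊆ S := fun x hx => hlow hx hmem
      have hnotmem : ∀ n : ℕ, c ≤ μ (Set.Iic (s + 1/((n:ℝ)+1))) := by
        intro n
        have hpos : (0:ℝ) < 1/((n:ℝ)+1) := by positivity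
        have hnm : s + 1/((n:ℝ)+1) ∉ S := fun hmem' => by
          have h2 := le_csSup hb hmem'
          rw [← hs] at h2
          linarith
        exact (lt_of_not_ge hnm).le
      have hinter : Set.Iic s = ⋂ n : ℕ, Set.Iic (s + 1/((n:ℝ)+1)) := by
        ext x
        simp only [Set.mem_Iic, Set.mem_iInter]
        constructor
        · intro hx n
          have : (0:ℝ) < 1/((n:ℝ)+1) := by positivity
          linarith
        · intro hx
          by_contra hcon
          obtain ⟨n, hn⟩ := exists_nat_one_div_lt (sub_pos.2 (lt_of_not_ge hcon))
          linarith [hx n]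
      have hanti : Antitone fun n : ℕ => Set.Iic (s + 1/((n:ℝ)+1)) := by
        intro m n hmn
        apply Set.Iic_subset_Iic.2
        have h1 : 1/((n:ℝ)+1) ≤ 1/((m:ℝ)+1) := by
          apply one_div_le_one_div_of_le (by positivity)
          have : (m:ℝ) ≤ n := by exact_mod_cast hmn
          linarith
        linarith
      have hmeasq : μ (Set.Iic s) = ⨅ n : ℕ, μ (Set.Iic (s + 1/((n:ℝ)+1))) := by
        rw [hinter]
        exact Directed.measure_iInter (fun n => measurableSet_Iic.nullMeasurableSet)
          hanti.directed_ge ⟨0, measure_ne_top μ _⟩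
      calc c ≤ ⨅ n : ℕ, μ (Set.Iic (s + 1/((n:ℝ)+1))) := le_iInf fun n => hnotmem n
        _ = μ (Set.Iic s) := hmeasq.symm
        _ ≤ μ S := measure_mono hIic
    · have hIio : Set.Iio s ⊆ S := by
        intro x hx
        obtain ⟨y, hy, hxy⟩ := exists_lt_of_lt_csSup hS hx
        exact hlow hxy.le hy
      have hcs : c ≤ μ (Set.Iic s) := (lt_of_not_ge hmem).le
      have hle : μ (Set.Iic s) ≤ μ (Set.Iio s) := by
        rw [← Set.Iio_union_right]
        refine le_trans (measure_union_le _ _) ?_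
        rw [hna s, add_zero]
      exact le_trans hcs (le_trans hle (measure_mono hIio))
  · have hSuniv : S = Set.univ := Set.eq_univ_of_forall fun x => by
      obtain ⟨y, hy, hxy⟩ := not_bddAbove_iff.1 hb x
      exact hlow hxy.le hy
    rw [hSuniv]
    simpa using hc

/-- Key step in the virtual hyperbolicity lemma: for `T(a,ω) = (g a, h_a(ω))` preserving a
probability measure `ρ` on `α × ℝ`, with `g` a measurable bijection with measurable inverse
and each fiber map `h_a` a strictly increasing homeomorphism of `ℝ`, the sublevel sets
`H_c = {(a,ω) | ρ_a((-∞,ω]) ≤ c}` of the fiberwise CDFs are `T`-invariant modulo `ρ`, satisfy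
`ρ(H_c) ≤ c`, and have measure exactly `c` for every `c ∈ [0,1]` if the conditional measures
are a.e. non-atomic. -/
theorem stmt11
    {α : Type*} [MeasurableSpace α] [StandardBorelSpace α] [Nonempty α]
    (ρ : Measure (α × ℝ)) [IsProbabilityMeasure ρ]
    (g : α ≃ᵐ α) (h : α → ℝ ≃ₜ ℝ) (hmono : ∀ a, StrictMono (h a))
    (T : α × ℝ → α × ℝ) (hT : T = fun p => (g p.1, h p.1 p.2))
    (hTmeas : Measurable T)
    (hinv : Measure.map T ρ = ρ)
    (H : ENNReal → Set (α × ℝ))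
    (hH : ∀ c, H c = {p : α × ℝ | ρ.condKernel p.1 (Set.Iic p.2) ≤ c}) :
    (∀ c : ENNReal, c ≤ 1 → ρ ((T ⁻¹' H c) ∆ H c) = 0 ∧ ρ (H c) ≤ c) ∧
      ((∀ᵐ a ∂ρ.fst, ∀ ω : ℝ, ρ.condKernel a {ω} = 0) →
        ∀ c : ENNReal, c ≤ 1 → ρ (H c) = c) := by
  -- slicing formula
  have hslice : ∀ E : Set (α × ℝ), MeasurableSet E →
      ρ E = ∫⁻ a, ρ.condKernel a (Prod.mk a ⁻¹' E) ∂ρ.fst := by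
    intro E hE
    have h2 := Measure.compProd_apply (μ := ρ.fst) (κ := ρ.condKernel) hE
    rwa [ρ.disintegrate ρ.condKernel] at h2
  -- the first marginal is invariant under g
  have hfst : Measure.map g ρ.fst = ρ.fst := by
    have hfT : (g ∘ Prod.fst : α × ℝ → α) = Prod.fst ∘ T := by
      funext p; simp [hT]
    have h1 : ρ.fst = Measure.map Prod.fst ρ := rfl
    rw [h1, Measure.map_map g.measurable measurable_fst, hfT,
      ← Measure.map_map measurable_fst hTmeas, hinv]
  -- joint measurability of (b, x) ↦ h (g.symm b) x
  have hhm : Measurable fun q : α × ℝ => h (g.symm q.1) q.2 := by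
    have heq : (fun q : α × ℝ => h (g.symm q.1) q.2) =
        fun q : α × ℝ => (T (g.symm q.1, q.2)).2 := by
      funext q; simp [hT]
    rw [heq]
    exact measurable_snd.comp (hTmeas.comp
      ((g.symm.measurable.comp measurable_fst).prodMk measurable_snd))
  -- the transported kernel
  set κfun : α → Measure ℝ :=
    fun b => Measure.map (h (g.symm b)) (ρ.condKernel (g.symm b)) with hκfun
  have hκcoe : ∀ s : Set ℝ, MeasurableSet s → ∀ b,
      κfun b s = ρ.condKernel (g.symm b) ((fun x => h (g.symm b) x) ⁻¹' s) := by
    intro s hs b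
    rw [hκfun]
    exact Measure.map_apply (h (g.symm b)).continuous.measurable hs
  have hκmeas : Measurable κfun := by
    apply Measure.measurable_of_measurable_coe
    intro s hs
    have ht : MeasurableSet {q : α × ℝ | h (g.symm q.1) q.2 ∈ s} := hhm hs
    have := Kernel.measurable_kernel_prodMk_left
      (κ := ρ.condKernel.comap g.symm g.symm.measurable) ht
    convert this using 1
    funext b
    rw [hκcoe s hs b, Kernel.comap_apply]
    rfl
  set κ : Kernel α ℝ := ⟨κfun, hκmeas⟩ with hκ
  have hκapp : ∀ b, κ b = κfun b := fun b => rfl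
  have : IsMarkovKernel κ := by
    constructor
    intro b
    rw [hκapp, hκfun]
    exact Measure.isProbabilityMeasure_map (h (g.symm b)).continuous.measurable.aemeasurable
  -- ρ disintegrates over κ as well
  have hcomp : ρ = ρ.fst ⊗ₘ κ := by
    ext s hs
    rw [Measure.compProd_apply hs]
    have h1 : ρ (T ⁻¹' s) = ∫⁻ a, ρ.condKernel a (Prod.mk a ⁻¹' (T ⁻¹' s)) ∂ρ.fst :=
      hslice _ (hTmeas hs)
    have h2 : ρ s = ρ (T ⁻¹' s) := by
      conv_lhs => rw [← hinv]
      rw [Measure.map_apply hTmeas hs]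
    have h3 : ∫⁻ b, κ b (Prod.mk b ⁻¹' s) ∂ρ.fst
        = ∫⁻ a, κ (g a) (Prod.mk (g a) ⁻¹' s) ∂ρ.fst := by
      conv_lhs => rw [← hfst]
      rw [lintegral_map (Kernel.measurable_kernel_prodMk_left hs) g.measurable]
    rw [h2, h1, h3]
    refine lintegral_congr fun a => ?_
    rw [hκapp, hκcoe _ (measurable_prodMk_left hs) (g a), g.symm_apply_apply]
    congr 1
    ext x
    simp only [Set.mem_preimage, hT]
  -- uniqueness of disintegration
  have huniq : ∀ᵐ b ∂ρ.fst, κ b = ρ.condKernel b :=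
    eq_condKernel_of_measure_eq_compProd κ hcomp
  have hqmp : Measure.QuasiMeasurePreserving g ρ.fst ρ.fst :=
    (⟨g.measurable, hfst⟩ : MeasurePreserving g ρ.fst ρ.fst).quasiMeasurePreserving
  have hae : ∀ᵐ a ∂ρ.fst, κ (g a) = ρ.condKernel (g a) := hqmp.tendsto_ae.eventually huniq
  -- key pointwise identity
  have hkey : ∀ᵐ a ∂ρ.fst, ∀ ω : ℝ,
      ρ.condKernel (g a) (Set.Iic (h a ω)) = ρ.condKernel a (Set.Iic ω) := by
    filter_upwards [hae] with a ha ω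
    rw [← ha, hκapp, hκcoe _ measurableSet_Iic, g.symm_apply_apply]
    refine congrArg _ (Set.ext fun t => ?_)
    simpa using (hmono a).le_iff_le
  -- measurability of the CDF and of H c
  have measF : Measurable fun p : α × ℝ => ρ.condKernel p.1 (Set.Iic p.2) := by
    have ht : MeasurableSet {q : (α × ℝ) × ℝ | q.2 ≤ q.1.2} :=
      measurableSet_le measurable_snd (measurable_snd.comp measurable_fst)
    let κ₂ : Kernel (α × ℝ) ℝ := ρ.condKernel.comap Prod.fst measurable_fst
    have hm2 := Kernel.measurable_kernel_prodMk_left (κ := κ₂) ht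
    have heq : (fun p : α × ℝ => ρ.condKernel p.1 (Set.Iic p.2)) =
        fun p : α × ℝ => κ₂ p (Prod.mk p ⁻¹' {q : (α × ℝ) × ℝ | q.2 ≤ q.1.2}) := rfl
    rw [heq]
    exact hm2
  have hHm : ∀ c, MeasurableSet (H c) := fun c => by
    rw [hH]
    exact measurableSet_le measF measurable_const
  have hfiber_eq : ∀ (c : ℝ≥0∞) (a : α),
      Prod.mk a ⁻¹' H c = {ω | ρ.condKernel a (Set.Iic ω) ≤ c} := by
    intro c a; ext ω; simp [hH]
  -- invariance
  have hinv_part : ∀ c : ℝ≥0∞, ρ ((T ⁻¹' H c) ∆ H c) = 0 := by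
    intro c
    have hmS : MeasurableSet ((T ⁻¹' H c) ∆ H c) := ((hHm c).preimage hTmeas).symmDiff (hHm c)
    rw [hslice _ hmS]
    have hz : ∀ᵐ a ∂ρ.fst, ρ.condKernel a (Prod.mk a ⁻¹' ((T ⁻¹' H c) ∆ H c)) = 0 := by
      filter_upwards [hkey] with a ha
      have hfib : Prod.mk a ⁻¹' (T ⁻¹' H c) = Prod.mk a ⁻¹' H c := by
        ext ω
        simp only [Set.mem_preimage, hH, hT, Set.mem_setOf_eq]
        rw [ha ω]
      rw [Set.preimage_symmDiff, hfib, symmDiff_self]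
      simp
    rw [lintegral_congr_ae hz, lintegral_zero]
  -- upper bound
  have hle : ∀ c : ℝ≥0∞, ρ (H c) ≤ c := by
    intro c
    rw [hslice _ (hHm c)]
    calc ∫⁻ a, ρ.condKernel a (Prod.mk a ⁻¹' H c) ∂ρ.fst
        ≤ ∫⁻ _, c ∂ρ.fst := lintegral_mono fun a => by
          rw [hfiber_eq]; exact cdf_sublevel_le _ c
      _ = c := by simp
  refine ⟨fun c _ => ⟨hinv_part c, hle c⟩, fun hna c hc => ?_⟩
  rw [hslice _ (hHm c)]
  have heqc : ∀ᵐ a ∂ρ.fst, ρ.condKernel a (Prod.mk a ⁻¹' H c) = c := by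
    filter_upwards [hna] with a ha
    rw [hfiber_eq]
    exact le_antisymm (cdf_sublevel_le _ c) (cdf_sublevel_ge _ ha c hc)
  rw [lintegral_congr_ae heqc]
  simp
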